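/- Let k be a field. The system of equations x₁y₁ = z₁², x₂y₁ + x₁y₂ = 2z₁z₂, x₁y₁ + x₁y₂ + x₂y₁ = 0 has a solution (x₁,x₂,y₁,y₂,z₁,z₂) ∈ k⁶ with x₁y₁z₁ ≠ 0 if and only if the characteristic of k is not 2. -/

import Mathlib

/-- Over a field `k`, the system `x₁y₁ = z₁²`, `x₂y₁ + x₁y₂ = 2z₁z₂`,
`x₁y₁ + x₁y₂ + x₂y₁ = 0` has a solution with `x₁y₁z₁ ≠ 0` iff `char k ≠ 2`. -/
theorem stmt5 (k : Type*) [Field k] :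
    (∃ x₁ x₂ y₁ y₂ z₁ z₂ : k,
        x₁ * y₁ = z₁ ^ 2 ∧
        x₂ * y₁ + x₁ * y₂ = 2 * z₁ * z₂ ∧
        x₁ * y₁ + x₁ * y₂ + x₂ * y₁ = 0 ∧
        x₁ * y₁ * z₁ ≠ 0) ↔ ringChar k ≠ 2 := by
  constructor
  · rintro ⟨x₁, x₂, y₁, y₂, z₁, z₂, h1, h2, h3, h4⟩ hc
    have h20 : (2 : k) = 0 := by
      have := ringChar.Nat.cast_ringChar (R := k)
      rw [hc] at this; exact_mod_cast this
    rw [h20] at h2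
    simp only [zero_mul] at h2
    exact h4 (by rw [mul_eq_zero]; left; linear_combination h3 - h2)
  · intro hc
    have h2 : (2 : k) ≠ 0 := Ring.two_ne_zero hc
    refine ⟨1, -1, 1, 0, 1, -2⁻¹, by ring, by field_simp; ring, by ring, by norm_num⟩
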